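/- arXiv:1703.10973 — 2 statements merged into one kernel-verified Lean document; each statement's English description precedes it below -/
import Mathlib

section
/- Let W_0 be an n×n symmetric positive definite matrix, U an n×k real matrix, and set W = W_0 + U U^T. Choose τ with λ_min(W_0) ≤ τ ≤ λ_max(W_0) and set W̃ = τ I + U U^T. Then the relative condition number κ(W̃^{-1/2} W W̃^{-1/2}) is at most κ(W_0) = λ_max(W_0)/λ_min(W_0). -/
open Matrix

lemma posDef_conj {n : ℕ} {A : Matrix (Fin n) (Fin n) ℝ} (hA : A.PosDef)
    {B : Matrix (Fin n) (Fin n) ℝ} (hB : IsUnit B) : (B * A * Bᴴ).PosDef := by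
  rw [posDef_iff_dotProduct_mulVec]
  refine ⟨isHermitian_mul_mul_conjTranspose B hA.1, fun x hx => ?_⟩
  have h1 : Bᴴ *ᵥ x ≠ 0 := by
    intro h
    apply hx
    have hinj := Matrix.mulVec_injective_iff_isUnit.mpr ((Matrix.isUnit_conjTranspose B).mpr hB)
    exact hinj (by simpa using h)
  have := (posDef_iff_dotProduct_mulVec.mp hA).2 h1
  simpa only [star_mulVec, dotProduct_mulVec, vecMul_vecMul, conjTranspose_conjTranspose] using this

lemma posDef_sub_smul_one {n : ℕ} {A : Matrix (Fin n) (Fin n) ℝ} (hA : A.IsHermitian) {c : ℝ}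
    (hc : ∀ i, c < hA.eigenvalues i) : (A - c • 1).PosDef := by
  set V : Matrix (Fin n) (Fin n) ℝ := (hA.eigenvectorUnitary : Matrix (Fin n) (Fin n) ℝ) with hVdef
  have hmul : V * star V = 1 := Matrix.mem_unitaryGroup_iff.mp hA.eigenvectorUnitary.2
  have hmul' : star V * V = 1 := Matrix.mem_unitaryGroup_iff'.mp hA.eigenvectorUnitary.2
  have hV : IsUnit V := ⟨⟨V, star V, hmul, hmul'⟩, rfl⟩
  have key : A - c • 1 = V * diagonal (fun i => hA.eigenvalues i - c) * Vᴴ := by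
    have h1 : (c • 1 : Matrix (Fin n) (Fin n) ℝ) = V * (c • 1) * Vᴴ := by
      rw [Matrix.mul_smul, mul_one, Matrix.smul_mul]
      congr 1
      exact hmul.symm
    nth_rewrite 1 [hA.spectral_theorem, h1]
    simp only [Unitary.conjStarAlgAut_apply, Matrix.star_eq_conjTranspose, ← hVdef]
    rw [← Matrix.sub_mul, ← Matrix.mul_sub]
    congr 1
    rw [Matrix.smul_one_eq_diagonal, diagonal_sub]
    rfl
  rw [key]
  exact posDef_conj (posDef_diagonal_iff.mpr fun i => sub_pos.mpr (hc i)) hV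

lemma posDef_smul_one_sub {n : ℕ} {A : Matrix (Fin n) (Fin n) ℝ} (hA : A.IsHermitian) {c : ℝ}
    (hc : ∀ i, hA.eigenvalues i < c) : (c • 1 - A).PosDef := by
  set V : Matrix (Fin n) (Fin n) ℝ := (hA.eigenvectorUnitary : Matrix (Fin n) (Fin n) ℝ) with hVdef
  have hmul : V * star V = 1 := Matrix.mem_unitaryGroup_iff.mp hA.eigenvectorUnitary.2
  have hmul' : star V * V = 1 := Matrix.mem_unitaryGroup_iff'.mp hA.eigenvectorUnitary.2
  have hV : IsUnit V := ⟨⟨V, star V, hmul, hmul'⟩, rfl⟩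
  have key : c • 1 - A = V * diagonal (fun i => c - hA.eigenvalues i) * Vᴴ := by
    have h1 : (c • 1 : Matrix (Fin n) (Fin n) ℝ) = V * (c • 1) * Vᴴ := by
      rw [Matrix.mul_smul, mul_one, Matrix.smul_mul]
      congr 1
      exact hmul.symm
    nth_rewrite 1 [hA.spectral_theorem, h1]
    simp only [Unitary.conjStarAlgAut_apply, Matrix.star_eq_conjTranspose, ← hVdef]
    rw [← Matrix.sub_mul, ← Matrix.mul_sub]
    congr 1
    rw [Matrix.smul_one_eq_diagonal, diagonal_sub]
    rfl
  rw [key]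
  exact posDef_conj (posDef_diagonal_iff.mpr fun i => sub_pos.mpr (hc i)) hV

lemma psd_smul {n : ℕ} {A : Matrix (Fin n) (Fin n) ℝ} (hA : A.PosSemidef) {c : ℝ}
    (hc : 0 ≤ c) : (c • A).PosSemidef := by
  rw [posSemidef_iff_dotProduct_mulVec]
  constructor
  · show (c • A)ᴴ = c • A
    rw [Matrix.conjTranspose_smul, star_trivial, hA.1]
  intro x
  rw [Matrix.smul_mulVec, dotProduct_smul]
  exact smul_nonneg hc (hA.dotProduct_mulVec_nonneg x)

/-- Let `W₀` be symmetric positive definite, `W = W₀ + U Uᵀ`,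
`W̃ = τ I + U Uᵀ` with `λ_min(W₀) ≤ τ ≤ λ_max(W₀)`.  Then the relative condition
number of the pencil `(W, W̃)` — i.e. the ratio of any two eigenvalues of
`W̃⁻¹ W` (which is similar to `W̃^{-1/2} W W̃^{-1/2}`) — is at most
`κ(W₀) = λ_max(W₀)/λ_min(W₀)`. -/
theorem stmt_1 {n k : ℕ} (hn : 0 < n) {W0 : Matrix (Fin n) (Fin n) ℝ}
    (hW0 : W0.PosDef) (U : Matrix (Fin n) (Fin k) ℝ) (τ : ℝ)
    (hτ1 : (⨅ i, hW0.1.eigenvalues i) ≤ τ)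
    (hτ2 : τ ≤ ⨆ i, hW0.1.eigenvalues i) :
    ∀ μ ∈ spectrum ℝ
        ((τ • (1 : Matrix (Fin n) (Fin n) ℝ) + U * Uᵀ)⁻¹ * (W0 + U * Uᵀ)),
    ∀ ν ∈ spectrum ℝ
        ((τ • (1 : Matrix (Fin n) (Fin n) ℝ) + U * Uᵀ)⁻¹ * (W0 + U * Uᵀ)),
      μ ≤ ((⨆ i, hW0.1.eigenvalues i) / (⨅ i, hW0.1.eigenvalues i)) * ν := by
  have : Nonempty (Fin n) := ⟨⟨0, hn⟩⟩
  set a := ⨅ i, hW0.1.eigenvalues i with ha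
  set b := ⨆ i, hW0.1.eigenvalues i with hb
  have ha_le : ∀ i, a ≤ hW0.1.eigenvalues i := fun i =>
    ciInf_le (Set.Finite.bddBelow (Set.finite_range _)) i
  have hle_b : ∀ i, hW0.1.eigenvalues i ≤ b := fun i =>
    le_ciSup (Set.Finite.bddAbove (Set.finite_range _)) i
  have ha_pos : 0 < a := by
    obtain ⟨i, hi⟩ := exists_eq_ciInf_of_finite (f := hW0.1.eigenvalues)
    rw [← ha] at hi
    rw [← hi]; exact hW0.eigenvalues_pos i
  have hτpos : 0 < τ := lt_of_lt_of_le ha_pos hτ1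
  have hUU : (U * Uᵀ).PosSemidef := by
    simpa using Matrix.posSemidef_self_mul_conjTranspose U
  set Wt : Matrix (Fin n) (Fin n) ℝ := τ • 1 + U * Uᵀ with hWt
  set W : Matrix (Fin n) (Fin n) ℝ := W0 + U * Uᵀ with hW
  have hWtPD : Wt.PosDef := by
    apply Matrix.PosDef.add_posSemidef _ hUU
    rw [Matrix.smul_one_eq_diagonal]
    exact posDef_diagonal_iff.mpr fun _ => hτpos
  have hWtunit : IsUnit Wt := hWtPD.isUnit
  have hWtinv : Wt⁻¹ * Wt = 1 :=
    Matrix.nonsing_inv_mul Wt ((Matrix.isUnit_iff_isUnit_det _).mp hWtunit)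
  -- spectrum is contained in [a/τ, b/τ]
  have key : ∀ μ ∈ spectrum ℝ (Wt⁻¹ * W), a / τ ≤ μ ∧ μ ≤ b / τ := by
    intro μ hμ
    rw [spectrum.mem_iff] at hμ
    constructor
    · by_contra hlt
      push_neg at hlt
      have hμτ : μ * τ < a := by
        rw [← lt_div_iff₀ hτpos] at *; exact hlt
      have hμ1 : μ ≤ 1 := by
        have : a / τ ≤ 1 := by rw [div_le_one hτpos]; exact hτ1
        linarith
      have hPD : (W - μ • Wt).PosDef := by
        have heq : W - μ • Wt = (W0 - (μ * τ) • 1) + (1 - μ) • (U * Uᵀ) := by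
          rw [hW, hWt]; module
        rw [heq]
        exact (posDef_sub_smul_one hW0.1 fun i => lt_of_lt_of_le hμτ (ha_le i)).add_posSemidef
          (psd_smul hUU (by linarith))
      apply hμ
      have heq2 : (algebraMap ℝ (Matrix (Fin n) (Fin n) ℝ)) μ - Wt⁻¹ * W
          = -(Wt⁻¹ * (W - μ • Wt)) := by
        rw [Algebra.algebraMap_eq_smul_one, Matrix.mul_sub, Matrix.mul_smul, hWtinv]
        abel
      rw [heq2]
      exact ((hWtPD.inv.isUnit).mul hPD.isUnit).neg
    · by_contra hlt
      push_neg at hlt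
      have hμτ : b < μ * τ := by
        rw [← div_lt_iff₀ hτpos] at *; exact hlt
      have hμ1 : 1 ≤ μ := by
        have : (1 : ℝ) ≤ b / τ := by rw [le_div_iff₀ hτpos]; simpa using hτ2
        linarith
      have hPD : (μ • Wt - W).PosDef := by
        have heq : μ • Wt - W = ((μ * τ) • 1 - W0) + (μ - 1) • (U * Uᵀ) := by
          rw [hW, hWt]; module
        rw [heq]
        exact (posDef_smul_one_sub hW0.1 fun i => lt_of_le_of_lt (hle_b i) hμτ).add_posSemidef
          (psd_smul hUU (by linarith))
      apply hμ
      have heq2 : (algebraMap ℝ (Matrix (Fin n) (Fin n) ℝ)) μ - Wt⁻¹ * W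
          = Wt⁻¹ * (μ • Wt - W) := by
        rw [Algebra.algebraMap_eq_smul_one, Matrix.mul_sub, Matrix.mul_smul, hWtinv]
      rw [heq2]
      exact (hWtPD.inv.isUnit).mul hPD.isUnit
  intro μ hμ ν hν
  obtain ⟨-, hμ2⟩ := key μ hμ
  obtain ⟨hν1, -⟩ := key ν hν
  have hb_pos : 0 < b := lt_of_lt_of_le ha_pos (le_trans hτ1 hτ2)
  have hba : (0 : ℝ) ≤ b / a := by positivity
  calc μ ≤ b / τ := hμ2
    _ = (b / a) * (a / τ) := by field_simp
    _ ≤ (b / a) * ν := mul_le_mul_of_nonneg_left hν1 hba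
end

section
/- Let A be a real m×N matrix with full column rank N, W_0 an n×n symmetric positive definite matrix (with N = n^2), U an n×k matrix, Z an n×n matrix with Z Z^T = 2 W_0 + U U^T, and define H = A^T (W_0 ⊗ W_0) A + A^T (U ⊗ Z)(U ⊗ Z)^T A and H̃ = τ^2 A^T A + A^T (U ⊗ Z)(U ⊗ Z)^T A, where λ_min(W_0) ≤ τ ≤ λ_max(W_0). Then the generalized condition number κ(H̃^{-1/2} H H̃^{-1/2}) ≤ κ(W_0)^2. -/
open Matrix
open scoped Kronecker


namespace Stmt4Aux

variable {p q : Type*} [Fintype p] [DecidableEq p] [Fintype q] [DecidableEq q]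

lemma kron_psd {M : Matrix p p ℝ} {P : Matrix q q ℝ}
    (hM : M.PosSemidef) (hP : P.PosSemidef) : (M ⊗ₖ P).PosSemidef := by
  exact hM.kronecker hP

lemma smul_one_diag (b : ℝ) :
    (b • (1 : Matrix p p ℝ)) = diagonal (fun _ => b) := by
  ext i j
  rcases eq_or_ne i j with rfl | hij
  · simp
  · simp [Matrix.one_apply_ne hij, Matrix.diagonal_apply_ne _ hij]

lemma smul_one_sub_psd {M : Matrix p p ℝ} (hM : M.IsHermitian) {b : ℝ}
    (hb : ∀ i, hM.eigenvalues i ≤ b) :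
    (b • (1 : Matrix p p ℝ) - M).PosSemidef := by
  have hV : (hM.eigenvectorUnitary : Matrix p p ℝ) *
      (star (hM.eigenvectorUnitary : Matrix p p ℝ)) = 1 :=
    (Matrix.mem_unitaryGroup_iff).mp hM.eigenvectorUnitary.2
  have key : b • (1 : Matrix p p ℝ) - M =
      (hM.eigenvectorUnitary : Matrix p p ℝ) *
        (diagonal (fun i => b - hM.eigenvalues i)) *
        (star (hM.eigenvectorUnitary : Matrix p p ℝ)) := by
    have hd : (diagonal (fun i => b - hM.eigenvalues i) : Matrix p p ℝ)
        = b • (1 : Matrix p p ℝ) - diagonal (RCLike.ofReal ∘ hM.eigenvalues) := by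
      rw [smul_one_diag, ← diagonal_sub]
      congr 1
    conv_lhs => rw [hM.spectral_theorem]
    rw [hd, Matrix.mul_sub, Matrix.sub_mul]
    congr 1
    rw [Matrix.mul_smul, mul_one, Matrix.smul_mul, hV]
  rw [key]
  have := (Matrix.PosSemidef.diagonal (d := fun i => b - hM.eigenvalues i)
      (fun i => sub_nonneg.2 (hb i))).mul_mul_conjTranspose_same
      (hM.eigenvectorUnitary : Matrix p p ℝ)
  simpa [Matrix.star_eq_conjTranspose] using this

lemma sub_smul_one_psd {M : Matrix p p ℝ} (hM : M.IsHermitian) {a : ℝ}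
    (ha : ∀ i, a ≤ hM.eigenvalues i) :
    (M - a • (1 : Matrix p p ℝ)).PosSemidef := by
  have hV : (hM.eigenvectorUnitary : Matrix p p ℝ) *
      (star (hM.eigenvectorUnitary : Matrix p p ℝ)) = 1 :=
    (Matrix.mem_unitaryGroup_iff).mp hM.eigenvectorUnitary.2
  have key : M - a • (1 : Matrix p p ℝ) =
      (hM.eigenvectorUnitary : Matrix p p ℝ) *
        (diagonal (fun i => hM.eigenvalues i - a)) *
        (star (hM.eigenvectorUnitary : Matrix p p ℝ)) := by
    have hd : (diagonal (fun i => hM.eigenvalues i - a) : Matrix p p ℝ)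
        = diagonal (RCLike.ofReal ∘ hM.eigenvalues) - a • (1 : Matrix p p ℝ) := by
      rw [smul_one_diag, ← diagonal_sub]
      congr 1
    conv_lhs => rw [hM.spectral_theorem]
    rw [hd, Matrix.mul_sub, Matrix.sub_mul]
    congr 1
    rw [Matrix.mul_smul, mul_one, Matrix.smul_mul, hV]
  rw [key]
  have := (Matrix.PosSemidef.diagonal (d := fun i => hM.eigenvalues i - a)
      (fun i => sub_nonneg.2 (ha i))).mul_mul_conjTranspose_same
      (hM.eigenvectorUnitary : Matrix p p ℝ)
  simpa [Matrix.star_eq_conjTranspose] using this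

lemma dot_conj {r : Type*} [Fintype r] (M : Matrix p p ℝ) (A : Matrix p r ℝ) (x : r → ℝ) :
    x ⬝ᵥ ((Aᵀ * M * A) *ᵥ x) = (A *ᵥ x) ⬝ᵥ (M *ᵥ (A *ᵥ x)) := by
  rw [← mulVec_mulVec, ← mulVec_mulVec, Matrix.dotProduct_mulVec x Aᵀ _, vecMul_transpose]

lemma spectrum_exists_eigvec {M : Matrix p p ℝ} {μ : ℝ} (h : μ ∈ spectrum ℝ M) :
    ∃ v : p → ℝ, v ≠ 0 ∧ M *ᵥ v = μ • v := by
  rw [spectrum.mem_iff] at h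
  have hdet : (algebraMap ℝ (Matrix p p ℝ) μ - M).det = 0 := by
    by_contra hd
    exact h ((Matrix.isUnit_iff_isUnit_det _).mpr (isUnit_iff_ne_zero.mpr hd))
  obtain ⟨v, hv0, hv⟩ := (Matrix.exists_mulVec_eq_zero_iff).mpr hdet
  refine ⟨v, hv0, ?_⟩
  rw [Matrix.sub_mulVec, Algebra.algebraMap_eq_smul_one, smul_mulVec, one_mulVec] at hv
  exact (sub_eq_zero.mp hv).symm


section More
variable {p : Type*} [Fintype p] [DecidableEq p]


lemma dot_self_nonneg (v : p → ℝ) : 0 ≤ v ⬝ᵥ v :=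
  Finset.sum_nonneg fun i _ => mul_self_nonneg _

lemma dot_self_pos {v : p → ℝ} (hv : v ≠ 0) : 0 < v ⬝ᵥ v :=
  lt_of_le_of_ne (dot_self_nonneg v) fun h => hv (dotProduct_self_eq_zero.mp h.symm)

lemma dot_ata {r : Type*} [Fintype r] (A : Matrix p r ℝ) (x : r → ℝ) :
    x ⬝ᵥ ((Aᵀ * A) *ᵥ x) = (A *ᵥ x) ⬝ᵥ (A *ᵥ x) := by
  rw [← mulVec_mulVec, Matrix.dotProduct_mulVec, vecMul_transpose]

lemma ratio_bound {mu s c w lmin lmax t : ℝ} (hs : 0 < s) (hc : 0 ≤ c)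
    (ht : 0 < t) (hmin : 0 < lmin) (h1 : lmin ≤ t) (h2 : t ≤ lmax)
    (hw1 : w ≤ lmax ^ 2 * s) (hw2 : lmin ^ 2 * s ≤ w)
    (heq : w + c = mu * (t ^ 2 * s + c)) :
    lmin ^ 2 / t ^ 2 ≤ mu ∧ mu ≤ lmax ^ 2 / t ^ 2 := by
  have ht2 : (0:ℝ) < t ^ 2 := by positivity
  have hD : 0 < t ^ 2 * s + c := by nlinarith
  have hr1 : lmin ^ 2 ≤ t ^ 2 := by nlinarith
  have hr2 : t ^ 2 ≤ lmax ^ 2 := by nlinarith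
  constructor
  · rw [div_le_iff₀ ht2]
    have hmain : lmin ^ 2 * (t ^ 2 * s + c) ≤ (mu * t ^ 2) * (t ^ 2 * s + c) := by nlinarith
    exact le_of_mul_le_mul_right hmain hD
  · rw [le_div_iff₀ ht2]
    have hmain : (mu * t ^ 2) * (t ^ 2 * s + c) ≤ lmax ^ 2 * (t ^ 2 * s + c) := by nlinarith
    exact le_of_mul_le_mul_right hmain hD

lemma final_arith {mu nu lmin lmax t : ℝ} (hmin : 0 < lmin) (ht : 0 < t)
    (hμu : mu ≤ lmax ^ 2 / t ^ 2) (hνl : lmin ^ 2 / t ^ 2 ≤ nu) :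
    mu ≤ (lmax / lmin) ^ 2 * nu := by
  have hq : (lmax / lmin) ^ 2 * (lmin ^ 2 / t ^ 2) = lmax ^ 2 / t ^ 2 := by
    field_simp
  have h2 : (lmax / lmin) ^ 2 * (lmin ^ 2 / t ^ 2) ≤ (lmax / lmin) ^ 2 * nu :=
    mul_le_mul_of_nonneg_left hνl (by positivity)
  linarith [hq ▸ h2]

end More
end Stmt4Aux

/-- Preconditioner quality for the Hessian matrix.  With
`H = 𝐀ᵀ(W₀⊗W₀)𝐀 + 𝐀ᵀ(U⊗Z)(U⊗Z)ᵀ𝐀` and `H̃ = τ²𝐀ᵀ𝐀 + 𝐀ᵀ(U⊗Z)(U⊗Z)ᵀ𝐀`,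
where `Z Zᵀ = 2W₀ + UUᵀ` and `λ_min(W₀) ≤ τ ≤ λ_max(W₀)`, the ratio of any two
eigenvalues of `H̃⁻¹ H` (similar to `H̃^{-1/2} H H̃^{-1/2}`) is at most
`κ(W₀)²`. -/
theorem stmt_4 {n k m : ℕ} (hn : 0 < n)
    (A : Matrix (Fin n × Fin n) (Fin m) ℝ) (hrank : A.rank = m)
    {W0 : Matrix (Fin n) (Fin n) ℝ} (hW0 : W0.PosDef)
    (U : Matrix (Fin n) (Fin k) ℝ) (Z : Matrix (Fin n) (Fin n) ℝ)
    (hZ : Z * Zᵀ = (2 : ℝ) • W0 + U * Uᵀ) (τ : ℝ)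
    (hτ1 : (⨅ i, hW0.1.eigenvalues i) ≤ τ)
    (hτ2 : τ ≤ ⨆ i, hW0.1.eigenvalues i) :
    ∀ μ ∈ spectrum ℝ
        ((τ ^ 2 • (Aᵀ * A) + Aᵀ * ((U ⊗ₖ Z) * (U ⊗ₖ Z)ᵀ) * A)⁻¹ *
          (Aᵀ * (W0 ⊗ₖ W0) * A + Aᵀ * ((U ⊗ₖ Z) * (U ⊗ₖ Z)ᵀ) * A)),
    ∀ ν ∈ spectrum ℝ
        ((τ ^ 2 • (Aᵀ * A) + Aᵀ * ((U ⊗ₖ Z) * (U ⊗ₖ Z)ᵀ) * A)⁻¹ *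
          (Aᵀ * (W0 ⊗ₖ W0) * A + Aᵀ * ((U ⊗ₖ Z) * (U ⊗ₖ Z)ᵀ) * A)),
      μ ≤ ((⨆ i, hW0.1.eigenvalues i) / (⨅ i, hW0.1.eigenvalues i)) ^ 2 * ν := by
  classical
  haveI : Nonempty (Fin n) := Fin.pos_iff_nonempty.mp hn
  set e := hW0.1.eigenvalues with he
  set lmin := ⨅ i, e i with hlmin
  set lmax := ⨆ i, e i with hlmax
  set K := U ⊗ₖ Z with hK
  set C := Aᵀ * (K * Kᵀ) * A with hC
  set Bm := τ ^ 2 • (Aᵀ * A) + C with hBm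
  set Hm := Aᵀ * (W0 ⊗ₖ W0) * A + C with hHm
  have hlemin : ∀ i, lmin ≤ e i := fun i => ciInf_le (Set.Finite.bddBelow (Set.finite_range e)) i
  have hlemax : ∀ i, e i ≤ lmax := fun i => le_ciSup (Set.Finite.bddAbove (Set.finite_range e)) i
  have hminpos : 0 < lmin := by
    obtain ⟨i0, hi0⟩ := exists_eq_ciInf_of_finite (f := e)
    rw [hlmin, ← hi0]
    exact hW0.eigenvalues_pos i0
  have hmaxpos : 0 < lmax :=
    lt_of_lt_of_le hminpos ((hlemin (Classical.arbitrary _)).trans (hlemax _))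
  have hτpos : 0 < τ := lt_of_lt_of_le hminpos hτ1
  have ht2 : (0:ℝ) < τ ^ 2 := by positivity
  -- A has trivial kernel
  have hker : ∀ x : Fin m → ℝ, x ≠ 0 → A *ᵥ x ≠ 0 := by
    intro x hx hAx
    have h1 : A.rank + Module.finrank ℝ (LinearMap.ker A.mulVecLin) = m := by
      rw [Matrix.rank]
      simpa using LinearMap.finrank_range_add_finrank_ker A.mulVecLin
    have h2 : Module.finrank ℝ (LinearMap.ker A.mulVecLin) = 0 := by omega
    have h3 : LinearMap.ker A.mulVecLin = ⊥ := Submodule.finrank_eq_zero.mp h2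
    have hx0 : x ∈ LinearMap.ker A.mulVecLin := by
      simpa [Matrix.mulVecLin_apply] using hAx
    rw [h3] at hx0
    exact hx (by simpa using hx0)
  -- quadratic forms
  have hCq : ∀ x : Fin m → ℝ, x ⬝ᵥ (C *ᵥ x) = (Kᵀ *ᵥ (A *ᵥ x)) ⬝ᵥ (Kᵀ *ᵥ (A *ᵥ x)) := by
    intro x
    rw [hC, Stmt4Aux.dot_conj, ← mulVec_mulVec, Matrix.dotProduct_mulVec,
      ← Matrix.mulVec_transpose]
  have hC0 : ∀ x : Fin m → ℝ, 0 ≤ x ⬝ᵥ (C *ᵥ x) := fun x => by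
    rw [hCq]; exact Stmt4Aux.dot_self_nonneg _
  have hBq : ∀ x : Fin m → ℝ,
      x ⬝ᵥ (Bm *ᵥ x) = τ ^ 2 * ((A *ᵥ x) ⬝ᵥ (A *ᵥ x)) + x ⬝ᵥ (C *ᵥ x) := by
    intro x
    rw [hBm, Matrix.add_mulVec, dotProduct_add, smul_mulVec, dotProduct_smul,
      smul_eq_mul, Stmt4Aux.dot_ata]
  have hBpos : ∀ x : Fin m → ℝ, x ≠ 0 → 0 < x ⬝ᵥ (Bm *ᵥ x) := by
    intro x hx
    rw [hBq]
    have := Stmt4Aux.dot_self_pos (hker x hx)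
    nlinarith [hC0 x]
  -- Bm is invertible
  have hBunit : IsUnit Bm := by
    rw [← Matrix.mulVec_injective_iff_isUnit]
    intro a b hab
    by_contra hne
    have hsub : Bm *ᵥ (a - b) = 0 := by
      rw [Matrix.mulVec_sub, hab, sub_self]
    have h0 : a - b ≠ 0 := sub_ne_zero.mpr fun h => hne (by rw [h])
    have := hBpos (a - b) h0
    rw [hsub] at this
    simp at this
  have hBH : Bm * (Bm⁻¹ * Hm) = Hm := by
    rw [← Matrix.mul_assoc, Matrix.mul_nonsing_inv _ ((Matrix.isUnit_iff_isUnit_det _).mp hBunit),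
      Matrix.one_mul]
  -- PSD sandwich matrices
  have psd1 : (lmax • (1 : Matrix (Fin n) (Fin n) ℝ)).PosSemidef := by
    rw [Stmt4Aux.smul_one_diag]
    exact Matrix.PosSemidef.diagonal fun _ => hmaxpos.le
  have psd5 : (lmin • (1 : Matrix (Fin n) (Fin n) ℝ)).PosSemidef := by
    rw [Stmt4Aux.smul_one_diag]
    exact Matrix.PosSemidef.diagonal fun _ => hminpos.le
  have psd2 : (lmax • 1 - W0).PosSemidef := Stmt4Aux.smul_one_sub_psd hW0.1 hlemax
  have psd4 : (W0 - lmin • 1).PosSemidef := Stmt4Aux.sub_smul_one_psd hW0.1 hlemin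
  have psd3 : W0.PosSemidef := hW0.posSemidef
  have h1k : (1 : Matrix (Fin n × Fin n) (Fin n × Fin n) ℝ)
      = (1 : Matrix (Fin n) (Fin n) ℝ) ⊗ₖ 1 := (Matrix.one_kronecker_one).symm
  have idU : lmax ^ 2 • (1 : Matrix (Fin n × Fin n) (Fin n × Fin n) ℝ) - W0 ⊗ₖ W0
      = (lmax • 1) ⊗ₖ (lmax • 1 - W0) + (lmax • 1 - W0) ⊗ₖ W0 := by
    rw [h1k]
    ext ⟨i, j⟩ ⟨a, b⟩
    simp only [Matrix.sub_apply, Matrix.add_apply, Matrix.smul_apply,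
      Matrix.kroneckerMap_apply, smul_eq_mul]
    ring
  have idL : W0 ⊗ₖ W0 - lmin ^ 2 • (1 : Matrix (Fin n × Fin n) (Fin n × Fin n) ℝ)
      = W0 ⊗ₖ (W0 - lmin • 1) + (W0 - lmin • 1) ⊗ₖ (lmin • 1) := by
    rw [h1k]
    ext ⟨i, j⟩ ⟨a, b⟩
    simp only [Matrix.sub_apply, Matrix.add_apply, Matrix.smul_apply,
      Matrix.kroneckerMap_apply, smul_eq_mul]
    ring
  have psdU : (lmax ^ 2 • (1 : Matrix (Fin n × Fin n) (Fin n × Fin n) ℝ)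
      - W0 ⊗ₖ W0).PosSemidef := by
    rw [idU]; exact (Stmt4Aux.kron_psd psd1 psd2).add (Stmt4Aux.kron_psd psd2 psd3)
  have psdL : (W0 ⊗ₖ W0
      - lmin ^ 2 • (1 : Matrix (Fin n × Fin n) (Fin n × Fin n) ℝ)).PosSemidef := by
    rw [idL]; exact (Stmt4Aux.kron_psd psd3 psd4).add (Stmt4Aux.kron_psd psd4 psd5)
  -- the key spectral bound
  have key : ∀ μ ∈ spectrum ℝ (Bm⁻¹ * Hm),
      lmin ^ 2 / τ ^ 2 ≤ μ ∧ μ ≤ lmax ^ 2 / τ ^ 2 := by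
    intro μ hμ
    obtain ⟨v, hv0, hv⟩ := Stmt4Aux.spectrum_exists_eigvec hμ
    have heig : Hm *ᵥ v = μ • (Bm *ᵥ v) := by
      calc Hm *ᵥ v = (Bm * (Bm⁻¹ * Hm)) *ᵥ v := by rw [hBH]
        _ = Bm *ᵥ ((Bm⁻¹ * Hm) *ᵥ v) := by rw [mulVec_mulVec]
        _ = Bm *ᵥ (μ • v) := by rw [hv]
        _ = μ • (Bm *ᵥ v) := by rw [Matrix.mulVec_smul]
    have hy0 : A *ᵥ v ≠ 0 := hker v hv0
    have hs : 0 < (A *ᵥ v) ⬝ᵥ (A *ᵥ v) := Stmt4Aux.dot_self_pos hy0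
    have hc : 0 ≤ v ⬝ᵥ (C *ᵥ v) := hC0 v
    set y := A *ᵥ v with hy
    set s := y ⬝ᵥ y with hsdef
    set c := v ⬝ᵥ (C *ᵥ v) with hcdef
    set w := y ⬝ᵥ ((W0 ⊗ₖ W0) *ᵥ y) with hwdef
    have hw1 : w ≤ lmax ^ 2 * s := by
      have h0 := psdU.dotProduct_mulVec_nonneg y
      simp only [star_trivial, Matrix.sub_mulVec, smul_mulVec, one_mulVec,
        dotProduct_sub, dotProduct_smul, smul_eq_mul] at h0
      rw [hwdef, hsdef]; linarith
    have hw2 : lmin ^ 2 * s ≤ w := by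
      have h0 := psdL.dotProduct_mulVec_nonneg y
      simp only [star_trivial, Matrix.sub_mulVec, smul_mulVec, one_mulVec,
        dotProduct_sub, dotProduct_smul, smul_eq_mul] at h0
      rw [hwdef, hsdef]; linarith
    have heq : w + c = μ * (τ ^ 2 * s + c) := by
      have h0 := congrArg (fun u => v ⬝ᵥ u) heig
      rw [hHm, Matrix.add_mulVec, dotProduct_add, Stmt4Aux.dot_conj, dotProduct_smul,
        smul_eq_mul, hBq] at h0
      rw [hwdef, hcdef, hsdef, hy]
      exact h0
    exact Stmt4Aux.ratio_bound hs hc hτpos hminpos hτ1 hτ2 hw1 hw2 heq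
  intro μ hμ ν hν
  obtain ⟨_, hμu⟩ := key μ hμ
  obtain ⟨hνl, _⟩ := key ν hν
  exact Stmt4Aux.final_arith hminpos hτpos hμu hνl
end
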